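/- Let T be a symmetric doubly stochastic primitive n×n matrix inducing the social network graph, and consider the Markov chain with transition matrix T. For distinct states a, b and any S ⊆ {1,…,n} containing a and b for which the subgraph with respect to S is connected, the mean commute time satisfies m_ab + m_ba ≤ 3 n log|S| / ρ_ab(S), where ρ_ab(S) = inf{ |S| · (Σ_{i∈S', j∈S∖S'} T_ij) / (|S'|·|S∖S'|) : S' ⊂ S, a ∈ S', b ∉ S' } is the minimum normalized cut value between a and b on the subgraph of the social network graph with respect to S. -/

import Mathlib

section AuxStmt16
open Matrix Finset


private lemma quad_le {n : ℕ} (B : Fin n → Fin n → ℝ) (hsB : ∀ i j, B i j = B j i)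
    (hnB : ∀ i j, 0 ≤ B i j) (s : ℝ) (hrB : ∀ i, ∑ j, B i j = s) (y : Fin n → ℝ) :
    ∑ i, ∑ j, B i j * (y i * y j) ≤ s * ∑ i, (y i)^2 := by
  have h3 : ∀ j : Fin n, ∑ i, B i j = s := by
    intro j; rw [← hrB j]; exact Finset.sum_congr rfl fun i _ => hsB i j
  have h1 : ∑ i, ∑ j, B i j * (y i * y j) ≤ ∑ i, ∑ j, (B i j * (y i)^2 / 2 + B i j * (y j)^2 / 2) := by
    refine Finset.sum_le_sum fun i _ => Finset.sum_le_sum fun j _ => ?_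
    have := hnB i j
    nlinarith [sq_nonneg (y i - y j)]
  have hA : ∑ i, ∑ j, B i j * (y i)^2 = s * ∑ i, (y i)^2 := by
    simp only [← Finset.sum_mul, hrB, ← Finset.mul_sum]
  have hBt : ∑ i, ∑ j, B i j * (y j)^2 = s * ∑ i, (y i)^2 := by
    rw [Finset.sum_comm]
    simp only [← Finset.sum_mul, h3, ← Finset.mul_sum]
  refine h1.trans (le_of_eq ?_)
  have : ∑ i, ∑ j, (B i j * (y i)^2 / 2 + B i j * (y j)^2 / 2)
      = (∑ i, ∑ j, B i j * (y i)^2) / 2 + (∑ i, ∑ j, B i j * (y j)^2) / 2 := by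
    simp only [Finset.sum_add_distrib, ← Finset.sum_div]
  rw [this, hA, hBt]; ring

private lemma contract {n : ℕ} (A : Fin n → Fin n → ℝ) (hsA : ∀ i j, A i j = A j i)
    (hnA : ∀ i j, 0 ≤ A i j) (s : ℝ) (hrA : ∀ i, ∑ j, A i j = s)
    (y : Fin n → ℝ) :
    ∑ i, (∑ j, A i j * y j)^2 ≤ s^2 * ∑ i, (y i)^2 := by
  have expand : ∑ i, (∑ j, A i j * y j)^2
      = ∑ j, ∑ k, (∑ i, A i j * A i k) * (y j * y k) := by
    have h : ∀ i : Fin n, (∑ j, A i j * y j)^2 = ∑ j, ∑ k, (A i j * A i k) * (y j * y k) := by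
      intro i
      rw [sq, Finset.sum_mul_sum]
      exact Finset.sum_congr rfl fun j _ => Finset.sum_congr rfl fun k _ => by ring
    simp only [h]
    rw [Finset.sum_comm]
    refine Finset.sum_congr rfl fun j _ => ?_
    rw [Finset.sum_comm]
    refine Finset.sum_congr rfl fun k _ => ?_
    rw [Finset.sum_mul]
  rw [expand]
  refine (quad_le (fun j k => ∑ i, A i j * A i k) ?_ ?_ (s^2) ?_ y)
  · intro j k; exact Finset.sum_congr rfl fun i _ => mul_comm _ _
  · intro j k; exact Finset.sum_nonneg fun i _ => mul_nonneg (hnA i j) (hnA i k)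
  · intro j
    have h1 : ∀ i : Fin n, ∑ k, A i j * A i k = A i j * s := by
      intro i; rw [← Finset.mul_sum, hrA]
    rw [Finset.sum_comm]
    simp only [h1]
    rw [← Finset.sum_mul]
    have h2 : ∑ i, A i j = s := by
      rw [← hrA j]; exact Finset.sum_congr rfl fun i _ => hsA i j
    rw [h2, sq]

private lemma rowsum_pow {n : ℕ} (T : Matrix (Fin n) (Fin n) ℝ)
    (hrow : ∀ i, ∑ j, T i j = 1) : ∀ m (i : Fin n), ∑ j, (T ^ m) i j = 1 := by
  intro m
  induction m with
  | zero => intro i; simp [Matrix.one_apply]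
  | succ m ih =>
    intro i
    rw [pow_succ']
    simp only [Matrix.mul_apply]
    rw [Finset.sum_comm]
    have : ∀ k : Fin n, ∑ j, T i k * (T ^ m) k j = T i k := by
      intro k; rw [← Finset.mul_sum, ih k, mul_one]
    simp only [this]
    exact hrow i

private lemma sym_pow {n : ℕ} (T : Matrix (Fin n) (Fin n) ℝ)
    (hsym : ∀ i j, T i j = T j i) : ∀ m (i j : Fin n), (T ^ m) i j = (T ^ m) j i := by
  have hT : T.IsSymm := by
    ext i j; exact hsym j i
  intro m i j
  have := (hT.pow m)
  calc (T ^ m) i j = ((T ^ m)ᵀ) j i := rfl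
  _ = (T ^ m) j i := by rw [this]
private lemma entry_bound {n : ℕ} (T : Matrix (Fin n) (Fin n) ℝ)
    (hsym : ∀ i j, T i j = T j i) (hnonneg : ∀ i j, 0 ≤ T i j)
    (hrow : ∀ i, ∑ j, T i j = 1) (κ : ℕ) (hκ : 0 < κ)
    (hpos : ∀ i j, 0 < (T ^ κ) i j) (j₀ : Fin n) :
    ∃ θ : ℝ, 0 ≤ θ ∧ θ < 1 ∧ ∀ m (i : Fin n), |(T ^ (m+1)) i j₀ - 1/n| ≤ θ ^ (m / κ) := by
  have hn : 0 < n := Fin.pos j₀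
  have hnR : 0 < (n : ℝ) := by exact_mod_cast hn
  -- minimum entry of T^κ
  obtain ⟨p, -, hp⟩ := Finset.exists_min_image (Finset.univ : Finset (Fin n × Fin n))
    (fun p => (T ^ κ) p.1 p.2) ⟨(j₀, j₀), Finset.mem_univ _⟩
  set ε : ℝ := (T ^ κ) p.1 p.2 with hε
  have hεpos : 0 < ε := hpos p.1 p.2
  have hεle : ∀ i j, ε ≤ (T ^ κ) i j := fun i j => hp (i, j) (Finset.mem_univ _)
  set θ : ℝ := 1 - n * ε with hθ
  have hθ0 : 0 ≤ θ := by
    have h1 : (n : ℝ) * ε = ∑ _j : Fin n, ε := by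
      simp [Finset.sum_const, nsmul_eq_mul]
    have h2 : ∑ _j : Fin n, ε ≤ ∑ j, (T ^ κ) p.1 j :=
      Finset.sum_le_sum fun j _ => hεle p.1 j
    rw [rowsum_pow T hrow κ p.1] at h2
    simp only [hθ]; linarith [h1 ▸ h2]
  have hθ1 : θ < 1 := by
    have : 0 < (n : ℝ) * ε := mul_pos hnR hεpos
    simp only [hθ]; linarith
  refine ⟨θ, hθ0, hθ1, ?_⟩
  -- the column-vector sequence
  set w : ℕ → Fin n → ℝ := fun m i => (T ^ (m+1)) i j₀ - 1/n with hw
  have hiter : ∀ q m (i : Fin n), w (m + q) i = ∑ k, (T ^ q) i k * w m k := by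
    intro q
    induction q with
    | zero => intro m i; simp [Matrix.one_apply]
    | succ q ih =>
      intro m i
      have h1 : w (m + (q+1)) i = ∑ k, T i k * w (m + q) k := by
        have hps : (T ^ (m + q + 2)) i j₀ = ∑ k, T i k * (T ^ (m + q + 1)) k j₀ := by
          have : T ^ (m + q + 2) = T * T ^ (m + q + 1) := by rw [← pow_succ']
          rw [this, Matrix.mul_apply]
        have : ∑ k, T i k * w (m + q) k
            = ∑ k, T i k * (T ^ (m + q + 1)) k j₀ - ∑ k, T i k * (1/n) := by
          rw [← Finset.sum_sub_distrib]
          exact Finset.sum_congr rfl fun k _ => by simp [hw]; ring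
        rw [this, ← Finset.sum_mul, hrow, ← hps]
        simp only [hw]
        have : m + (q + 1) + 1 = m + q + 2 := by omega
        rw [this]; ring
      rw [h1]
      have h2 : ∀ k : Fin n, w (m + q) k = ∑ l, (T ^ q) k l * w m l := fun k => ih m k
      simp only [h2, Finset.mul_sum]
      rw [Finset.sum_comm]
      refine Finset.sum_congr rfl fun l _ => ?_
      have hps : (T ^ (q+1)) i l = ∑ k, T i k * (T ^ q) k l := by
        have : T ^ (q + 1) = T * T ^ q := by rw [← pow_succ']
        rw [this, Matrix.mul_apply]
      rw [hps, Finset.sum_mul]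
      exact Finset.sum_congr rfl fun k _ => by ring
  have hmz : ∀ m, ∑ i, w m i = 0 := by
    intro m
    have h1 : ∑ i, (T ^ (m+1)) i j₀ = 1 := by
      have : ∀ i, (T ^ (m+1)) i j₀ = (T ^ (m+1)) j₀ i := fun i => sym_pow T hsym (m+1) i j₀
      simp only [this]
      exact rowsum_pow T hrow (m+1) j₀
    rw [Finset.sum_sub_distrib, h1]
    simp [Finset.sum_const, nsmul_eq_mul]
    field_simp
    norm_num
  set N : ℕ → ℝ := fun m => ∑ i, (w m i)^2 with hN
  have hNstep : ∀ m, N (m + 1) ≤ N m := by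
    intro m
    have h1 : ∀ i : Fin n, w (m+1) i = ∑ k, T i k * w m k := by
      intro i
      have := hiter 1 m i
      simpa [pow_one] using this
    have h2 := contract T hsym hnonneg 1 hrow (w m)
    simp only [one_pow, one_mul] at h2
    calc N (m+1) = ∑ i, (∑ k, T i k * w m k)^2 := by
          simp only [hN]; exact Finset.sum_congr rfl fun i _ => by rw [h1 i]
    _ ≤ ∑ i, (w m i)^2 := h2
  have hNmono : ∀ m m', m ≤ m' → N m' ≤ N m := by
    intro m m' h
    induction m' with
    | zero => simp_all
    | succ m' ih =>
      rcases Nat.lt_or_ge m (m' + 1) with h' | h'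
      · exact (hNstep m').trans (ih (by omega))
      · have : m = m' + 1 := by omega
        subst this; rfl
  have hN0 : N 0 ≤ 1 := by
    have ht : ∀ i : Fin n, (0:ℝ) ≤ T i j₀ := fun i => hnonneg i j₀
    have hcol : ∑ i, T i j₀ = 1 := by
      have : ∀ i, T i j₀ = T j₀ i := fun i => hsym i j₀
      simp only [this]; exact hrow j₀
    have hsq : ∑ i, (T i j₀)^2 ≤ 1 := by
      have h1 : ∀ i : Fin n, (T i j₀)^2 ≤ T i j₀ := by
        intro i
        have hle : T i j₀ ≤ 1 := by
          have := Finset.single_le_sum (f := fun i => T i j₀) (fun i _ => ht i) (Finset.mem_univ i)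
          linarith [hcol ▸ this]
        nlinarith [ht i]
      calc ∑ i, (T i j₀)^2 ≤ ∑ i, T i j₀ := Finset.sum_le_sum fun i _ => h1 i
      _ = 1 := hcol
    have per : ∀ i : Fin n, (T i j₀ - 1/(n:ℝ))^2 = (T i j₀)^2 - 2/n * T i j₀ + (1/n)^2 :=
      fun i => by ring
    have expand : ∑ i, (T i j₀ - 1/(n:ℝ))^2
        = (∑ i, (T i j₀)^2) - 2/n * (∑ i, T i j₀) + (n:ℝ) * (1/n)^2 := by
      simp only [per, Finset.sum_add_distrib, Finset.sum_sub_distrib, Finset.sum_const,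
        Finset.card_univ, Fintype.card_fin, nsmul_eq_mul, ← Finset.mul_sum]
    have hc : (n:ℝ) * (1/n)^2 = 1/n := by field_simp
    have h1n : 0 < 1/(n:ℝ) := by positivity
    have goal2 : ∑ i, (T i j₀ - 1/(n:ℝ))^2 ≤ 1 := by
      rw [expand, hcol, hc]
      have e : (∑ i, (T i j₀)^2) - 2/(n:ℝ) * 1 + 1/n = (∑ i, (T i j₀)^2) - 1/n := by ring
      rw [e]
      linarith [hsq, h1n]
    simp only [hN, hw, zero_add, pow_one]
    exact goal2
  have hNκ : ∀ m, N (m + κ) ≤ θ^2 * N m := by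
    intro m
    have h1 : ∀ i : Fin n, w (m + κ) i = ∑ k, ((T ^ κ) i k - ε) * w m k := by
      intro i
      rw [hiter κ m i]
      rw [← sub_eq_zero, ← Finset.sum_sub_distrib]
      have : ∀ k : Fin n, (T ^ κ) i k * w m k - ((T ^ κ) i k - ε) * w m k = ε * w m k := by
        intro k; ring
      simp only [this, ← Finset.mul_sum, hmz m, mul_zero]
    have h2 := contract (fun i k => (T ^ κ) i k - ε)
      (fun i k => by simp [sym_pow T hsym κ i k])
      (fun i k => by show (0:ℝ) ≤ (T ^ κ) i k - ε; linarith [hεle i k]) θ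
      (fun i => by
        rw [Finset.sum_sub_distrib, rowsum_pow T hrow κ i]
        simp [Finset.sum_const, nsmul_eq_mul, hθ])
      (w m)
    calc N (m + κ) = ∑ i, (∑ k, ((T ^ κ) i k - ε) * w m k)^2 := by
          exact Finset.sum_congr rfl fun i _ => by rw [h1 i]
    _ ≤ θ^2 * N m := h2
  have hNq : ∀ q, N (q * κ) ≤ θ^(2*q) := by
    intro q
    induction q with
    | zero => simpa using hN0
    | succ q ih =>
      have h1 : (q+1) * κ = q * κ + κ := by ring
      rw [h1]
      calc N (q * κ + κ) ≤ θ^2 * N (q * κ) := hNκ _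
      _ ≤ θ^2 * θ^(2*q) := by nlinarith [sq_nonneg θ]
      _ = θ^(2*(q+1)) := by ring
  intro m i
  set q : ℕ := m / κ with hq
  have hqm : q * κ ≤ m := Nat.div_mul_le_self m κ
  have h1 : (w m i)^2 ≤ N m := by
    have : ∀ j : Fin n, (0:ℝ) ≤ (w m j)^2 := fun j => sq_nonneg _
    exact Finset.single_le_sum (fun j _ => this j) (Finset.mem_univ i)
  have h2 : N m ≤ θ^(2*q) := (hNmono _ _ hqm).trans (hNq q)
  have h3 : (w m i)^2 ≤ (θ^q)^2 := by
    rw [← pow_mul, mul_comm]; linarith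
  have h4 := Real.sqrt_le_sqrt h3
  rw [Real.sqrt_sq_eq_abs, Real.sqrt_sq (by positivity)] at h4
  simpa [hw] using h4
private lemma summable_col {n : ℕ} (T : Matrix (Fin n) (Fin n) ℝ)
    (hsym : ∀ i j, T i j = T j i) (hnonneg : ∀ i j, 0 ≤ T i j)
    (hrow : ∀ i, ∑ j, T i j = 1)
    (hprim : ∃ k : ℕ, 0 < k ∧ ∀ a b, 0 < (T ^ k) a b) (j₀ i : Fin n) :
    Summable (fun m : ℕ => (T ^ m) i j₀ - 1/n) := by
  obtain ⟨κ, hκ, hpos⟩ := hprim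
  obtain ⟨θ, hθ0, hθ1, hbd⟩ := entry_bound T hsym hnonneg hrow κ hκ hpos j₀
  set θ' : ℝ := max θ 2⁻¹ with hθ'
  have hθ'0 : 0 < θ' := lt_of_lt_of_le (by norm_num) (le_max_right _ _)
  have hθ'1 : θ' < 1 := max_lt hθ1 (by norm_num)
  set r : ℝ := θ' ^ ((κ:ℝ)⁻¹) with hr
  have hκR : 0 < (κ:ℝ) := by exact_mod_cast hκ
  have hr0 : 0 < r := Real.rpow_pos_of_pos hθ'0 _
  have hr1 : r < 1 := Real.rpow_lt_one (le_of_lt hθ'0) hθ'1 (by positivity)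
  have hgeom : Summable (fun m : ℕ => θ'⁻¹ * r ^ m) :=
    (summable_geometric_of_lt_one (le_of_lt hr0) hr1).mul_left _
  have hb : ∀ m : ℕ, θ' ^ (m / κ) ≤ θ'⁻¹ * r ^ m := by
    intro m
    have hexp : (m:ℝ)/κ - 1 ≤ ((m / κ : ℕ) : ℝ) := by
      have h2 : m % κ < κ := Nat.mod_lt m hκ
      have h3 : m < κ * (m / κ) + κ := by
        have h1 := Nat.div_add_mod m κ
        omega
      have h4 : (m:ℝ) < (κ:ℝ) * ((m / κ : ℕ):ℝ) + κ := by exact_mod_cast h3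
      have h5 : (m:ℝ)/κ < ((m / κ : ℕ):ℝ) + 1 := by
        rw [div_lt_iff₀ hκR]; nlinarith
      linarith
    have hmdiv : (m:ℝ)/κ = (κ:ℝ)⁻¹ * m := by ring
    calc θ' ^ (m / κ) = θ' ^ (((m / κ : ℕ):ℝ)) := (Real.rpow_natCast θ' _).symm
    _ ≤ θ' ^ ((m:ℝ)/κ - 1) :=
        Real.rpow_le_rpow_of_exponent_ge hθ'0 (le_of_lt hθ'1) hexp
    _ = (θ' ^ ((m:ℝ)/κ)) / θ' := by rw [Real.rpow_sub hθ'0, Real.rpow_one]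
    _ = ((θ' ^ ((κ:ℝ)⁻¹)) ^ ((m:ℕ):ℝ)) / θ' := by
        rw [hmdiv, Real.rpow_mul (le_of_lt hθ'0)]
    _ = θ'⁻¹ * r ^ m := by rw [Real.rpow_natCast]; ring
  have hsum1 : Summable (fun m : ℕ => θ' ^ (m / κ)) :=
    Summable.of_nonneg_of_le (fun m => by positivity) hb hgeom
  have habs : Summable (fun m : ℕ => |(T ^ (m+1)) i j₀ - 1/n|) :=
    Summable.of_nonneg_of_le (fun m => abs_nonneg _)
      (fun m => (hbd m i).trans (pow_le_pow_left₀ hθ0 (le_max_left _ _) _)) hsum1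
  have hshift : Summable (fun m : ℕ => (T ^ (m+1)) i j₀ - 1/n) := habs.of_abs
  exact (summable_nat_add_iff 1).mp hshift

private lemma harm_log (m : ℕ) (hm : 2 ≤ m) :
    2 * (harmonic (m-1) : ℝ) ≤ 3 * Real.log m := by
  have hlog2 : (0.6931471803 : ℝ) < Real.log 2 := Real.log_two_gt_d9
  rcases le_or_gt m 4 with h4 | h5
  · interval_cases m
    · have : harmonic 1 = 1 := by norm_num [harmonic]
      rw [show (2:ℕ) - 1 = 1 from rfl, this]
      push_cast
      nlinarith [hlog2]
    · have : harmonic 2 = 3/2 := by norm_num [harmonic, Finset.sum_range_succ]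
      rw [show (3:ℕ) - 1 = 2 from rfl, this]
      have h3 : (1:ℝ) ≤ Real.log 3 := by
        rw [Real.le_log_iff_exp_le (by norm_num : (0:ℝ) < 3)]
        have := Real.exp_one_lt_d9
        linarith
      push_cast
      nlinarith [h3]
    · have : harmonic 3 = 11/6 := by norm_num [harmonic, Finset.sum_range_succ]
      rw [show (4:ℕ) - 1 = 3 from rfl, this]
      have h4' : Real.log 4 = 2 * Real.log 2 := by
        rw [show (4:ℝ) = 2^2 by norm_num, Real.log_pow]
        push_cast; ring
      push_cast
      rw [h4']
      nlinarith [hlog2]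
  · have hM5 : (5:ℝ) ≤ (m:ℝ) := by exact_mod_cast h5
    have hm1 : 1 ≤ m := by omega
    have hcast : ((m - 1 : ℕ) : ℝ) = (m:ℝ) - 1 := by
      push_cast [Nat.cast_sub hm1]; ring
    have h1 : (harmonic (m-1) : ℝ) ≤ 1 + Real.log ((m:ℝ) - 1) := by
      have := harmonic_le_one_add_log (m-1)
      rwa [hcast] at this
    set M : ℝ := (m:ℝ) with hM
    have hM1 : (1:ℝ) < M - 1 := by linarith
    have hexp2 : Real.exp 2 < 7.39 := by
      have h := Real.exp_one_lt_d9
      have : Real.exp 2 = Real.exp 1 * Real.exp 1 := by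
        rw [← Real.exp_add]; norm_num
      nlinarith [Real.exp_pos 1]
    have hkey : Real.exp 2 * (M - 1)^2 ≤ M^3 := by
      nlinarith [sq_nonneg (M - 5), mul_nonneg (sub_nonneg.mpr hM5) (sq_nonneg (M - 1)),
        sq_nonneg (M-1), Real.exp_pos 2]
    have hlogkey : 2 + 2 * Real.log (M - 1) ≤ 3 * Real.log M := by
      have hpos1 : (0:ℝ) < Real.exp 2 * (M - 1)^2 := by positivity
      have h2 := Real.log_le_log hpos1 hkey
      rw [Real.log_mul (by positivity) (by positivity), Real.log_exp, Real.log_pow,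
        Real.log_pow] at h2
      push_cast at h2
      linarith
    linarith

end AuxStmt16

open Matrix

noncomputable section

/-- the fundamental matrix `Y = Σ_{k=0}^∞ (T^k − T^∞)` of a doubly stochastic
Markov chain, whose limit matrix `T^∞` has all entries `1/n`. -/
def fundY {n : ℕ} (T : Matrix (Fin n) (Fin n) ℝ) : Matrix (Fin n) (Fin n) ℝ :=
  Matrix.of fun i j => ∑' k : ℕ, ((T ^ k) i j - 1 / n)

/-- the mean first passage time `m_ij = n (Y_jj − Y_ij)` from state `i` to
state `j` of a doubly stochastic Markov chain with transition matrix `T`. -/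
def mfp {n : ℕ} (T : Matrix (Fin n) (Fin n) ℝ) (i j : Fin n) : ℝ :=
  n * (fundY T j j - fundY T i j)

/-- `isPathOn E i j L` : there is a path of length `L` from `i` to `j` using
edges in `E`. -/
def isPathOn {V : Type*} (E : V → V → Prop) (i j : V) (L : ℕ) : Prop :=
  ∃ f : ℕ → V, f 0 = i ∧ f L = j ∧ ∀ l < L, E (f l) (f (l + 1))

/-- the edge weights of the subgraph of a weighted graph with respect to a set
`S` of nodes: weights within `S` are kept, and for each `i ∈ S` the weights of
removed edges are folded into the self-loop weight. -/
def subW {n : ℕ} (w : Fin n → Fin n → ℝ) (S : Finset (Fin n)) :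
    {x // x ∈ S} → {x // x ∈ S} → ℝ :=
  fun i j => if (i : Fin n) = (j : Fin n) then w i i + ∑ k ∈ Sᶜ, w i k else w i j

set_option maxHeartbeats 2000000 in
/-- Theorem 12: for the Markov chain with symmetric doubly stochastic primitive
transition matrix `T` and any `S` containing `a` and `b` whose subgraph is
connected, `m_ab + m_ba ≤ 3 n log|S| / ρ_ab(S)`, where `ρ_ab(S)` is the minimum
normalized cut value between `a` and `b` on the subgraph with respect to `S`. -/
theorem stmt_16 {n : ℕ}
    (T : Matrix (Fin n) (Fin n) ℝ)
    (hsym : ∀ i j, T i j = T j i)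
    (hnonneg : ∀ i j, 0 ≤ T i j)
    (hrow : ∀ i, ∑ j, T i j = 1)
    (hprim : ∃ k : ℕ, 0 < k ∧ ∀ a b, 0 < (T ^ k) a b)
    (a b : Fin n) (hab : a ≠ b) (S : Finset (Fin n)) (ha : a ∈ S) (hb : b ∈ S)
    -- the subgraph with respect to S is connected
    (hsubconn : ∀ u v : {x // x ∈ S}, ∃ L,
      isPathOn (fun c d : {x // x ∈ S} =>
        0 < subW (fun i j => T i j) S c d) u v L)
    -- ρ_ab(S) : the minimum normalized cut value between a and b on the subgraph
    (ρS : ℝ)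
    (hρS : IsLeast {r : ℝ | ∃ S' : Finset (Fin n), S' ⊆ S ∧ a ∈ S' ∧ b ∉ S' ∧
      r = (S.card : ℝ) * (∑ i ∈ S', ∑ j ∈ S \ S', T i j) /
        ((S'.card : ℝ) * ((S \ S').card : ℝ))} ρS) :
    mfp T a b + mfp T b a ≤ 3 * n * Real.log S.card / ρS := by
  classical
  have hn : 0 < n := Fin.pos a
  have hnR : (0:ℝ) < n := by exact_mod_cast hn
  set m : ℕ := S.card with hm
  have hm2 : 2 ≤ m := Finset.one_lt_card.mpr ⟨a, ha, b, hb, hab⟩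
  have hmR : (2:ℝ) ≤ (m:ℝ) := by exact_mod_cast hm2
  set φ : Fin n → ℝ := fun i => fundY T i a - fundY T i b with hφ
  have fundY_apply : ∀ i j : Fin n, fundY T i j = ∑' k : ℕ, ((T ^ k) i j - 1/n) :=
    fun i j => rfl
  -- the harmonic equation (I - T) φ = e_a - e_b
  have key : ∀ i, φ i - ∑ k, T i k * φ k
      = (if i = a then (1:ℝ) else 0) - (if i = b then 1 else 0) := by
    intro i
    have hcol : ∀ j₀ : Fin n, ∑ k, T i k * fundY T k j₀
        = fundY T i j₀ - ((if i = j₀ then (1:ℝ) else 0) - 1/n) := by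
      intro j₀
      have hsummable : ∀ k : Fin n, Summable (fun mm : ℕ => T i k * ((T ^ mm) k j₀ - 1/n)) :=
        fun k => (summable_col T hsym hnonneg hrow hprim j₀ k).mul_left _
      have h1 : ∀ k : Fin n, T i k * fundY T k j₀
          = ∑' mm : ℕ, T i k * ((T ^ mm) k j₀ - 1/n) := by
        intro k; rw [fundY_apply, tsum_mul_left]
      have h2 : ∑ k, T i k * fundY T k j₀
          = ∑' mm : ℕ, ∑ k, T i k * ((T ^ mm) k j₀ - 1/n) := by
        simp only [h1]
        exact (Summable.tsum_finsetSum (fun k _ => hsummable k)).symm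
      have h3 : ∀ mm : ℕ, ∑ k, T i k * ((T ^ mm) k j₀ - 1/n)
          = (T ^ (mm+1)) i j₀ - 1/n := by
        intro mm
        have hps : (T ^ (mm+1)) i j₀ = ∑ k, T i k * (T ^ mm) k j₀ := by
          have : T ^ (mm + 1) = T * T ^ mm := by rw [← pow_succ']
          rw [this, Matrix.mul_apply]
        have hexp : ∑ k, T i k * ((T ^ mm) k j₀ - 1/n)
            = ∑ k, T i k * (T ^ mm) k j₀ - ∑ k, T i k * (1/n) := by
          rw [← Finset.sum_sub_distrib]
          exact Finset.sum_congr rfl fun k _ => by ring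
        rw [hexp, ← Finset.sum_mul, hrow, ← hps]; ring
      have h4 := Summable.tsum_eq_zero_add (summable_col T hsym hnonneg hrow hprim j₀ i)
      rw [h2, tsum_congr h3, fundY_apply, h4]
      rw [pow_zero, Matrix.one_apply]
      ring
    have hsub : ∑ k, T i k * φ k
        = ∑ k, T i k * fundY T k a - ∑ k, T i k * fundY T k b := by
      rw [← Finset.sum_sub_distrib]
      exact Finset.sum_congr rfl fun k _ => by simp only [hφ]; ring
    rw [hsub, hcol a, hcol b]
    simp only [hφ]
    ring
  -- current through any a-b cut is 1
  have current : ∀ A : Finset (Fin n), a ∈ A → b ∉ A →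
      ∑ i ∈ A, ∑ k ∈ Aᶜ, T i k * (φ i - φ k) = 1 := by
    intro A haA hbA
    have h1 : ∀ i : Fin n, φ i - ∑ k, T i k * φ k = ∑ k, T i k * (φ i - φ k) := by
      intro i
      have hexp : ∑ k, T i k * (φ i - φ k) = ∑ k, T i k * φ i - ∑ k, T i k * φ k := by
        rw [← Finset.sum_sub_distrib]
        exact Finset.sum_congr rfl fun k _ => by ring
      rw [hexp, ← Finset.sum_mul, hrow, one_mul]
    have h2 : ∑ i ∈ A, (φ i - ∑ k, T i k * φ k) = 1 := by
      simp only [key]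
      rw [Finset.sum_sub_distrib]
      rw [Finset.sum_ite_eq' A a (fun _ => (1:ℝ)), Finset.sum_ite_eq' A b (fun _ => (1:ℝ))]
      simp [haA, hbA]
    have h3 : ∑ i ∈ A, ∑ k, T i k * (φ i - φ k) = 1 := by
      rw [← h2]; exact Finset.sum_congr rfl fun i _ => (h1 i).symm
    have h5 : ∑ i ∈ A, ∑ k ∈ A, T i k * (φ i - φ k) = 0 := by
      have hswap : ∑ i ∈ A, ∑ k ∈ A, T i k * (φ i - φ k)
          = ∑ i ∈ A, ∑ k ∈ A, T k i * (φ k - φ i) := by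
        rw [Finset.sum_comm]
      have hzero : ∑ i ∈ A, ∑ k ∈ A, (T i k * (φ i - φ k) + T k i * (φ k - φ i)) = 0 := by
        refine Finset.sum_eq_zero fun i _ => Finset.sum_eq_zero fun k _ => ?_
        rw [hsym i k]; ring
      have hsplit : ∑ i ∈ A, ∑ k ∈ A, (T i k * (φ i - φ k) + T k i * (φ k - φ i))
          = ∑ i ∈ A, ∑ k ∈ A, T i k * (φ i - φ k) + ∑ i ∈ A, ∑ k ∈ A, T k i * (φ k - φ i) := by
        simp only [Finset.sum_add_distrib]
      rw [hsplit] at hzero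
      linarith [hswap, hzero]
    have h6 : ∀ i : Fin n, ∑ k, T i k * (φ i - φ k)
        = ∑ k ∈ A, T i k * (φ i - φ k) + ∑ k ∈ Aᶜ, T i k * (φ i - φ k) := by
      intro i; rw [Finset.sum_add_sum_compl]
    have h7 : ∑ i ∈ A, ∑ k, T i k * (φ i - φ k)
        = ∑ i ∈ A, ∑ k ∈ A, T i k * (φ i - φ k) + ∑ i ∈ A, ∑ k ∈ Aᶜ, T i k * (φ i - φ k) := by
      simp only [h6, Finset.sum_add_distrib]
    rw [h7, h5, zero_add] at h3
    exact h3
  -- positivity of cuts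
  have cutpos : ∀ S' : Finset (Fin n), S' ⊆ S → a ∈ S' → b ∉ S' →
      0 < ∑ i ∈ S', ∑ j ∈ S \ S', T i j := by
    intro S' hsub haS' hbS'
    obtain ⟨L, f, hf0, hfL, hstep⟩ := hsubconn ⟨a, ha⟩ ⟨b, hb⟩
    have hPL : ((f L : {x // x ∈ S}) : Fin n) ∉ S' := by rw [hfL]; exact hbS'
    have hP : ∃ l, ((f l : {x // x ∈ S}) : Fin n) ∉ S' := ⟨L, hPL⟩
    set l0 := Nat.find hP with hl0
    have hl0P : ((f l0 : {x // x ∈ S}) : Fin n) ∉ S' := Nat.find_spec hP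
    have hl0L : l0 ≤ L := Nat.find_min' hP hPL
    have hl0pos : 0 < l0 := by
      rcases Nat.eq_zero_or_pos l0 with h | h
      · exfalso; apply hl0P; rw [h, hf0]; exact haS'
      · exact h
    have hprev : ¬ (((f (l0 - 1) : {x // x ∈ S}) : Fin n) ∉ S') :=
      Nat.find_min hP (by omega)
    have hprev' : ((f (l0 - 1) : {x // x ∈ S}) : Fin n) ∈ S' := not_not.mp hprev
    have hedge : 0 < subW (fun i j => T i j) S (f (l0 - 1)) (f l0) := by
      have := hstep (l0 - 1) (by omega)
      have heq : l0 - 1 + 1 = l0 := by omega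
      rwa [heq] at this
    have huv : ((f (l0 - 1) : {x // x ∈ S}) : Fin n) ≠ ((f l0 : {x // x ∈ S}) : Fin n) := by
      intro h; exact hl0P (h ▸ hprev')
    have hTpos : 0 < T ((f (l0 - 1) : {x // x ∈ S}) : Fin n) ((f l0 : {x // x ∈ S}) : Fin n) := by
      have := hedge
      rw [subW, if_neg huv] at this
      exact this
    refine Finset.sum_pos' (fun i _ => Finset.sum_nonneg fun j _ => hnonneg i j) ?_
    refine ⟨((f (l0 - 1) : {x // x ∈ S}) : Fin n), hprev', ?_⟩
    refine Finset.sum_pos' (fun j _ => hnonneg _ j) ?_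
    refine ⟨((f l0 : {x // x ∈ S}) : Fin n), ?_, hTpos⟩
    exact Finset.mem_sdiff.mpr ⟨(f l0).2, hl0P⟩
  -- positivity of ρS and the cut lower bound
  obtain ⟨S0, hS0sub, haS0, hbS0, hρeq⟩ := hρS.1
  have hρpos : 0 < ρS := by
    rw [hρeq]
    have h1 : 0 < (S0.card : ℝ) := by
      have : 0 < S0.card := Finset.card_pos.mpr ⟨a, haS0⟩
      exact_mod_cast this
    have h2 : 0 < ((S \ S0).card : ℝ) := by
      have : 0 < (S \ S0).card := Finset.card_pos.mpr ⟨b, Finset.mem_sdiff.mpr ⟨hb, hbS0⟩⟩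
      exact_mod_cast this
    have h3 := cutpos S0 hS0sub haS0 hbS0
    have h4 : (0:ℝ) < (m:ℝ) := by linarith
    rw [hm]
    positivity
  have hρle : ∀ S' : Finset (Fin n), S' ⊆ S → a ∈ S' → b ∉ S' →
      ρS * ((S'.card : ℝ) * ((S \ S').card : ℝ))
        ≤ (m:ℝ) * ∑ i ∈ S', ∑ j ∈ S \ S', T i j := by
    intro S' hsub haS' hbS'
    have hmem : (S.card : ℝ) * (∑ i ∈ S', ∑ j ∈ S \ S', T i j) /
        ((S'.card : ℝ) * ((S \ S').card : ℝ)) ∈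
        {r : ℝ | ∃ S' : Finset (Fin n), S' ⊆ S ∧ a ∈ S' ∧ b ∉ S' ∧
          r = (S.card : ℝ) * (∑ i ∈ S', ∑ j ∈ S \ S', T i j) /
            ((S'.card : ℝ) * ((S \ S').card : ℝ))} := ⟨S', hsub, haS', hbS', rfl⟩
    have hle := hρS.2 hmem
    have h1 : 0 < (S'.card : ℝ) := by
      have : 0 < S'.card := Finset.card_pos.mpr ⟨a, haS'⟩
      exact_mod_cast this
    have h2 : 0 < ((S \ S').card : ℝ) := by
      have : 0 < (S \ S').card := Finset.card_pos.mpr ⟨b, Finset.mem_sdiff.mpr ⟨hb, hbS'⟩⟩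
      exact_mod_cast this
    have hd : 0 < (S'.card : ℝ) * ((S \ S').card : ℝ) := mul_pos h1 h2
    rw [← hm] at hle
    exact (le_div_iff₀ hd).mp hle
  -- LHS as n * (φ a - φ b)
  have hLHS : mfp T a b + mfp T b a = n * (φ a - φ b) := by
    simp only [mfp, hφ]; ring
  have hRHSnn : 0 ≤ 3 * (n:ℝ) * Real.log m / ρS := by
    have : (0:ℝ) ≤ Real.log m := Real.log_nonneg (by linarith)
    positivity
  rcases le_or_gt (φ a) (φ b) with heasy | hhard
  · rw [hLHS]
    have h0 : (n:ℝ) * (φ a - φ b) ≤ 0 := by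
      apply mul_nonpos_of_nonneg_of_nonpos (le_of_lt hnR)
      linarith
    exact h0.trans hRHSnn
  -- hard case : sorting argument
  · suffices hmain : φ a - φ b ≤ 3 * Real.log m / ρS by
      rw [hLHS]
      calc (n:ℝ) * (φ a - φ b) ≤ (n:ℝ) * (3 * Real.log m / ρS) := by
            apply mul_le_mul_of_nonneg_left hmain (le_of_lt hnR)
      _ = 3 * n * Real.log m / ρS := by ring
    -- enumerate S in φ-decreasing order
    obtain ⟨e, heS, hanti, heinj, hesurj⟩ :
        ∃ e : Fin m → Fin n, (∀ k, e k ∈ S) ∧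
          (∀ k l : Fin m, k ≤ l → φ (e l) ≤ φ (e k)) ∧
          Function.Injective e ∧ (∀ i, i ∈ S → ∃ k, e k = i) := by
      set g := S.orderIsoOfFin hm.symm with hg
      set f0 : Fin m → ℝ := fun k => - φ ((g k : {x // x ∈ S}) : Fin n) with hf0
      set σ := Tuple.sort f0 with hσ
      refine ⟨fun k => ((g (σ k) : {x // x ∈ S}) : Fin n), fun k => (g (σ k)).2, ?_, ?_, ?_⟩
      · intro k l hkl
        have h1 := Tuple.monotone_sort f0 hkl
        simp only [Function.comp_apply, hf0] at h1
        linarith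
      · intro k l h
        exact σ.injective (g.injective (Subtype.ext h))
      · intro i hi
        exact ⟨σ.symm (g.symm ⟨i, hi⟩), by simp⟩
    have hm0 : 0 < m := by omega
    set E : ℕ → Fin n := fun l => e ⟨l % m, Nat.mod_lt _ hm0⟩ with hE
    set ψ : ℕ → ℝ := fun l => φ (E l) with hψ
    have hEe : ∀ (l : ℕ) (h : l < m), E l = e ⟨l, h⟩ := by
      intro l h
      simp only [hE]
      congr 1
      exact Fin.ext (Nat.mod_eq_of_lt h)
    have hψanti : ∀ l l' : ℕ, l ≤ l' → l' < m → ψ l' ≤ ψ l := by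
      intro l l' h h'
      have hl : l < m := lt_of_le_of_lt h h'
      simp only [hψ]
      rw [hEe l hl, hEe l' h']
      exact hanti ⟨l, hl⟩ ⟨l', h'⟩ (Fin.mk_le_mk.mpr h)
    obtain ⟨ka, hka⟩ := hesurj a ha
    obtain ⟨kb, hkb⟩ := hesurj b hb
    set pa : ℕ := (ka : ℕ) with hpa
    set pb : ℕ := (kb : ℕ) with hpb
    have hEpa : ψ pa = φ a := by
      have h1 : (⟨pa, ka.isLt⟩ : Fin m) = ka := Fin.ext rfl
      simp only [hψ]
      rw [hEe pa ka.isLt, h1, hka]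
    have hEpb : ψ pb = φ b := by
      have h1 : (⟨pb, kb.isLt⟩ : Fin m) = kb := Fin.ext rfl
      simp only [hψ]
      rw [hEe pb kb.isLt, h1, hkb]
    have hpapb : pa < pb := by
      by_contra hcon
      push_neg at hcon
      have := hψanti pb pa hcon ka.isLt
      rw [hEpa, hEpb] at this
      linarith
    have hpbm : pb < m := kb.isLt
    -- the gap bound
    have hgap : ∀ j : ℕ, pa ≤ j → j + 1 ≤ pb →
        ψ j - ψ (j+1) ≤ 1/ρS * (1/((j:ℝ)+1) + 1/((m:ℝ)-((j:ℝ)+1))) := by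
      intro j hja hjb
      have hjm : j + 1 < m := lt_of_le_of_lt hjb hpbm
      have hjmle : j + 1 ≤ m := le_of_lt hjm
      have hjmlt : j < m := by omega
      have hpos2 : (0:ℝ) < (j:ℝ)+1 := by positivity
      have hpos3 : (0:ℝ) < (m:ℝ)-((j:ℝ)+1) := by
        have : ((j:ℝ)+1) < (m:ℝ) := by exact_mod_cast hjm
        linarith
      rcases le_or_gt (ψ j - ψ (j+1)) 0 with hg | hg
      · refine hg.trans ?_
        positivity
      set A : Finset (Fin n) := Finset.univ.filter (fun i => ψ (j+1) < φ i) with hA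
      set SA : Finset (Fin n) := S.filter (fun i => ψ (j+1) < φ i) with hSA
      have hSAsub : SA ⊆ S := Finset.filter_subset _ _
      have haA : ψ (j+1) < φ a := by
        have h1 : ψ j ≤ ψ pa := hψanti pa j hja hjmlt
        rw [hEpa] at h1
        linarith
      have hbA : ¬ ψ (j+1) < φ b := by
        have h1 : ψ pb ≤ ψ (j+1) := hψanti (j+1) pb hjb hpbm
        rw [hEpb] at h1
        linarith
      have haSA : a ∈ SA := Finset.mem_filter.mpr ⟨ha, haA⟩
      have hbSA : b ∉ SA := fun h => hbA (Finset.mem_filter.mp h).2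
      have hSAimg : SA = (Finset.range (j+1)).image E := by
        ext i
        simp only [hSA, Finset.mem_filter, Finset.mem_image, Finset.mem_range]
        constructor
        · rintro ⟨hiS, hiφ⟩
          obtain ⟨k, hk⟩ := hesurj i hiS
          refine ⟨(k : ℕ), ?_, by rw [hEe _ k.isLt, Fin.eta, hk]⟩
          by_contra hge
          push_neg at hge
          have h1 : ψ (k : ℕ) ≤ ψ (j+1) := hψanti (j+1) (k : ℕ) hge k.isLt
          have h2 : ψ (k : ℕ) = φ i := by
            simp only [hψ]; rw [hEe _ k.isLt, Fin.eta, hk]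
          rw [h2] at h1
          linarith
        · rintro ⟨l, hl, rfl⟩
          have hlm : l < m := by omega
          refine ⟨by rw [hEe l hlm]; exact heS _, ?_⟩
          have h1 : ψ j ≤ ψ l → True := fun _ => trivial
          have h2 : ψ l ≥ ψ j := by
            have := hψanti l j (by omega) hjmlt
            linarith [this]
          have h3 : (ψ l : ℝ) = φ (E l) := rfl
          rw [← h3]
          linarith
      have hEinjOn : Set.InjOn E (Finset.range (j+1) : Set ℕ) := by
        intro x hx y hy hxy
        simp only [Finset.coe_range, Set.mem_Iio] at hx hy
        have hxm : x < m := by omega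
        have hym : y < m := by omega
        rw [hEe x hxm, hEe y hym] at hxy
        have := heinj hxy
        exact Fin.mk.inj_iff.mp this
      have hSAcard : SA.card = j+1 := by
        rw [hSAimg, Finset.card_image_of_injOn hEinjOn, Finset.card_range]
      have hSdcard : (S \ SA).card = m - (j+1) := by
        rw [Finset.card_sdiff_of_subset hSAsub, hSAcard, hm]
      -- pointwise bounds on the cut
      have hφup : ∀ i ∈ SA, ψ j ≤ φ i := by
        intro i hi
        rw [hSAimg] at hi
        obtain ⟨l, hl, rfl⟩ := Finset.mem_image.mp hi
        have hl' : l < j + 1 := Finset.mem_range.mp hl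
        have := hψanti l j (by omega) hjmlt
        exact this
      have hφdn : ∀ k' ∈ S \ SA, φ k' ≤ ψ (j+1) := by
        intro k' hk'
        obtain ⟨hk1, hk2⟩ := Finset.mem_sdiff.mp hk'
        by_contra hcon
        push_neg at hcon
        exact hk2 (Finset.mem_filter.mpr ⟨hk1, hcon⟩)
      -- restrict the unit current to the S-cut
      have hcur := current A (Finset.mem_filter.mpr ⟨Finset.mem_univ _, haA⟩)
        (fun h => hbA (Finset.mem_filter.mp h).2)
      have hsubprod : SA ×ˢ (S \ SA) ⊆ A ×ˢ Aᶜ := by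
        intro p hp
        rw [Finset.mem_product] at hp ⊢
        obtain ⟨hp1, hp2⟩ := hp
        constructor
        · exact Finset.mem_filter.mpr ⟨Finset.mem_univ _, (Finset.mem_filter.mp hp1).2⟩
        · rw [Finset.mem_compl]
          intro hc
          have := (Finset.mem_filter.mp hc).2
          have h2 := hφdn p.2 hp2
          linarith
      have hrestrict : ∑ i ∈ SA, ∑ k' ∈ S \ SA, T i k' * (φ i - φ k') ≤ 1 := by
        rw [← hcur, ← Finset.sum_product', ← Finset.sum_product']
        refine Finset.sum_le_sum_of_subset_of_nonneg hsubprod ?_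
        intro p hp _
        rw [Finset.mem_product] at hp
        obtain ⟨hp1, hp2⟩ := hp
        have h1 : ψ (j+1) < φ p.1 := (Finset.mem_filter.mp hp1).2
        have h2 : ¬ ψ (j+1) < φ p.2 := by
          intro hc
          exact (Finset.mem_compl.mp hp2) (Finset.mem_filter.mpr ⟨Finset.mem_univ _, hc⟩)
        push_neg at h2
        have := hnonneg p.1 p.2
        nlinarith
      have hgapterm : (ψ j - ψ (j+1)) * (∑ i ∈ SA, ∑ k' ∈ S \ SA, T i k') ≤ 1 := by
        refine le_trans ?_ hrestrict
        rw [Finset.mul_sum]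
        refine Finset.sum_le_sum fun i hi => ?_
        rw [Finset.mul_sum]
        refine Finset.sum_le_sum fun k' hk' => ?_
        have h1 := hφup i hi
        have h2 := hφdn k' hk'
        have h3 := hnonneg i k'
        nlinarith
      have hcut := cutpos SA hSAsub haSA hbSA
      have hρle' := hρle SA hSAsub haSA hbSA
      have hc1 : (SA.card : ℝ) = (j:ℝ)+1 := by rw [hSAcard]; push_cast; ring
      have hc2 : ((S \ SA).card : ℝ) = (m:ℝ) - ((j:ℝ)+1) := by
        rw [hSdcard]
        push_cast [Nat.cast_sub hjmle]
        ring
      rw [hc1, hc2] at hρle'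
      have h1 : ψ j - ψ (j+1) ≤ 1 / (∑ i ∈ SA, ∑ k' ∈ S \ SA, T i k') := by
        rw [le_div_iff₀ hcut]
        exact hgapterm
      have h2 : 1 / (∑ i ∈ SA, ∑ k' ∈ S \ SA, T i k')
          ≤ (m:ℝ) / (ρS * (((j:ℝ)+1) * ((m:ℝ)-((j:ℝ)+1)))) := by
        rw [div_le_div_iff₀ hcut (by positivity)]
        nlinarith [hρle']
      have hxy : ((j:ℝ)+1) + ((m:ℝ)-((j:ℝ)+1)) = (m:ℝ) := by ring
      have h3 : (m:ℝ) / (ρS * (((j:ℝ)+1) * ((m:ℝ)-((j:ℝ)+1))))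
          = 1/ρS * (1/((j:ℝ)+1) + 1/((m:ℝ)-((j:ℝ)+1))) := by
        rw [← hxy]
        field_simp
        have hy : ((j:ℝ)+1) + ((m:ℝ)-((j:ℝ)+1)) - ((j:ℝ)+1) = (m:ℝ)-((j:ℝ)+1) := by ring
        rw [hy, add_div, div_self hpos3.ne']
        ring
      rw [h3] at h2
      linarith
    -- telescoping
    have htel : φ a - φ b = ∑ j ∈ Finset.Ico pa pb, (ψ j - ψ (j+1)) := by
      have hts := Finset.sum_range_sub' (fun i => ψ (pa + i)) (pb - pa)
      have hpp : pa + (pb - pa) = pb := by omega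
      simp only [Nat.add_zero] at hts
      rw [hpp] at hts
      rw [← hEpa, ← hEpb, Finset.sum_Ico_eq_sum_range]
      exact hts.symm
    have hico : Finset.Ico pa pb ⊆ Finset.range (m-1) := by
      intro j hj
      have := Finset.mem_Ico.mp hj
      rw [Finset.mem_range]
      omega
    have hbd1 : ∑ j ∈ Finset.Ico pa pb, (ψ j - ψ (j+1))
        ≤ ∑ j ∈ Finset.Ico pa pb, 1/ρS * (1/((j:ℝ)+1) + 1/((m:ℝ)-((j:ℝ)+1))) := by
      refine Finset.sum_le_sum fun j hj => ?_
      have hj' := Finset.mem_Ico.mp hj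
      exact hgap j hj'.1 hj'.2
    have hbd2 : ∑ j ∈ Finset.Ico pa pb, 1/ρS * (1/((j:ℝ)+1) + 1/((m:ℝ)-((j:ℝ)+1)))
        ≤ ∑ j ∈ Finset.range (m-1), 1/ρS * (1/((j:ℝ)+1) + 1/((m:ℝ)-((j:ℝ)+1))) := by
      refine Finset.sum_le_sum_of_subset_of_nonneg hico ?_
      intro j hj _
      have hjm : j < m - 1 := Finset.mem_range.mp hj
      have hpos3 : (0:ℝ) < (m:ℝ)-((j:ℝ)+1) := by
        have : (j:ℝ) + 1 < (m:ℝ) := by exact_mod_cast (by omega : j + 1 < m)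
        linarith
      positivity
    have hH : ∑ j ∈ Finset.range (m-1), (1/((j:ℝ)+1) + 1/((m:ℝ)-((j:ℝ)+1)))
        = 2 * (harmonic (m-1) : ℝ) := by
      rw [Finset.sum_add_distrib]
      have hH1 : ∑ j ∈ Finset.range (m-1), 1/((j:ℝ)+1) = (harmonic (m-1) : ℝ) := by
        rw [harmonic]
        push_cast
        refine Finset.sum_congr rfl fun j _ => ?_
        rw [one_div]
      have hH2 : ∑ j ∈ Finset.range (m-1), 1/((m:ℝ)-((j:ℝ)+1))
          = ∑ j ∈ Finset.range (m-1), 1/((j:ℝ)+1) := by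
        rw [← Finset.sum_range_reflect (fun j => 1/((j:ℝ)+1)) (m-1)]
        refine Finset.sum_congr rfl fun j hj => ?_
        have hjm : j < m - 1 := Finset.mem_range.mp hj
        have hcast : ((m - 1 - 1 - j : ℕ) : ℝ) = (m:ℝ) - 2 - (j:ℝ) := by
          have h1 : m - 1 - 1 - j = m - (2 + j) := by omega
          rw [h1, Nat.cast_sub (by omega : 2 + j ≤ m)]
          push_cast
          ring
        rw [hcast]
        ring
      rw [hH1, hH2, hH1]
      ring
    have hsplit : ∑ j ∈ Finset.range (m-1), 1/ρS * (1/((j:ℝ)+1) + 1/((m:ℝ)-((j:ℝ)+1)))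
        = 1/ρS * (2 * (harmonic (m-1) : ℝ)) := by
      rw [← Finset.mul_sum, hH]
    have hlog := harm_log m hm2
    have hfin : φ a - φ b ≤ 1/ρS * (3 * Real.log m) := by
      rw [htel]
      refine (hbd1.trans hbd2).trans ?_
      rw [hsplit]
      have h1 : (0:ℝ) ≤ 1/ρS := by positivity
      nlinarith [hlog]
    calc φ a - φ b ≤ 1/ρS * (3 * Real.log m) := hfin
    _ = 3 * Real.log m / ρS := by ring
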